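/- Let h₁ : (a, f) → (a', f') and h₂ : (b, g) → (b', g') be morphisms of modules over the Drinfeld quiver Q_z. Then h₁ ⊗ h₂ : a ⊗ b → a' ⊗ b' is a morphism of modules (a ⊗ b, f ⊗̂ g) → (a' ⊗ b', f' ⊗̂ g'), i.e. (h₁ ⊗ h₂) ∘ (f ⊗̂ g) = (f' ⊗̂ g') ∘ (id_z ⊗ (h₁ ⊗ h₂)). -/

import Mathlib

/-!
Statement 0: If `h₁ : (a, f) → (a', f')` and `h₂ : (b, g) → (b', g')` are morphisms of modules
over the Drinfeld quiver `Q_z`, then `h₁ ⊗ h₂` is a morphism of modules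
`(a ⊗ b, f ⊗̂ g) → (a' ⊗ b', f' ⊗̂ g')`.
-/

open CategoryTheory MonoidalCategory

universe v u

variable {k : Type*} [Field k]
variable {A : Type u} [Category.{v} A] [MonoidalCategory A]
  [Preadditive A] [CategoryTheory.Linear k A] [MonoidalPreadditive A] [MonoidalLinear k A]

/-- The fusion product `f ⊗̂ g` of two modules `(a, f)` and `(b, g)` over the Drinfeld quiver
`Q_z` of an object `z` of the Drinfeld center of `A`. -/
noncomputable def fus (z : CategoryTheory.Center A) {a b : A}
    (f : z.1 ⊗ a ⟶ a) (g : z.1 ⊗ b ⟶ b) : z.1 ⊗ (a ⊗ b) ⟶ a ⊗ b :=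
  (α_ z.1 a b).inv ≫ (f ▷ b)
    + (α_ z.1 a b).inv ≫ ((z.2.β a).hom ▷ b) ≫ (α_ a z.1 b).hom ≫ (a ◁ g)

theorem tensorHom_is_module_morphism (z : CategoryTheory.Center A)
    {a a' b b' : A}
    (f : z.1 ⊗ a ⟶ a) (f' : z.1 ⊗ a' ⟶ a') (g : z.1 ⊗ b ⟶ b) (g' : z.1 ⊗ b' ⟶ b')
    (h₁ : a ⟶ a') (h₂ : b ⟶ b')
    (hh₁ : f ≫ h₁ = (z.1 ◁ h₁) ≫ f')
    (hh₂ : g ≫ h₂ = (z.1 ◁ h₂) ≫ g') :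
    fus z f g ≫ (h₁ ⊗ₘ h₂) = (z.1 ◁ (h₁ ⊗ₘ h₂)) ≫ fus z f' g' := by
  unfold fus
  simp only [Preadditive.add_comp, Preadditive.comp_add, Category.assoc, MonoidalCategory.tensorHom_def]
  congr 1
  · rw [← comp_whiskerRight_assoc, hh₁, comp_whiskerRight_assoc]
    rw [← whisker_exchange]
    simp only [MonoidalCategory.whiskerLeft_comp, Category.assoc,
      associator_inv_naturality_right_assoc, associator_inv_naturality_middle_assoc]
  · slice_lhs 4 5 => rw [whisker_exchange]
    slice_lhs 5 6 => rw [← MonoidalCategory.whiskerLeft_comp, hh₂,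
      MonoidalCategory.whiskerLeft_comp]
    slice_lhs 3 4 => rw [← associator_naturality_left]
    slice_lhs 2 3 => rw [← comp_whiskerRight, ← HalfBraiding.naturality, comp_whiskerRight]
    slice_lhs 1 2 => rw [← associator_inv_naturality_middle]
    slice_lhs 4 5 => rw [← associator_naturality_right]
    simp only [MonoidalCategory.whiskerLeft_comp, Category.assoc]
    congr 1
    rw [associator_inv_naturality_right_assoc, whisker_exchange_assoc]
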